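/- For d an odd prime and the MUB states defined via |ψ_t^k⟩ = (1/√d) Σ_j ω^{t(d-j)} ω^{-k s_j}|j⟩ (k ≥ 1) and |ψ_t^0⟩ = |t⟩, the operator Q = (1/(d(d+1))) Σ_{k=0}^{d} Σ_{t=0}^{d-1} (|ψ_t^k⟩⟨ψ_t^k|)^{⊗2} is diagonal in the product computational basis of (ℂ^d)^{⊗2}, with ⟨j_1 j_2| Q |j_3 j_4⟩ = 0 whenever {j_1,j_2} ≠ {j_3,j_4} as multisets. -/

import Mathlib

open scoped BigOperators

/-- `M`-fold tensor power `|φ⟩^{⊗M}` of a vector `φ ∈ ℂ^d`, as a vector on the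
computational product basis `Fin M → Fin d`. -/
noncomputable def vecPow {d : ℕ} (M : ℕ) (φ : Fin d → ℂ) : (Fin M → Fin d) → ℂ :=
  fun f => ∏ i, φ (f i)

/-- Rank-one operator `|v⟩⟨v|`. -/
noncomputable def projOp {n : Type*} [Fintype n] (v : n → ℂ) : Matrix n n ℂ :=
  Matrix.of fun i j => v i * star (v j)

/-- The orthogonal projector `P_+^M` onto the symmetric subspace of `(ℂ^d)^{⊗M}`. -/
noncomputable def symProj (d M : ℕ) : Matrix (Fin M → Fin d) (Fin M → Fin d) ℂ :=
  Matrix.of fun f g =>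
    (∑ σ : Equiv.Perm (Fin M), if f = g ∘ σ then (1 : ℂ) else 0) / (Nat.factorial M : ℂ)

/-- `d_M^+ = C(M+d-1, M)`, the dimension of the symmetric subspace. -/
def dPlus (d M : ℕ) : ℕ := (M + d - 1).choose M

/-- `s_j = j + (j+1) + ⋯ + (d-1)`. -/
def sIdx (d j : ℕ) : ℕ := ∑ i ∈ Finset.Ico j d, i

/-- The complete set of `d+1` mutually unbiased bases in `ℂ^d` (`d` an odd
prime): `|ψ_t^0⟩ = |t⟩` and, for `k ≥ 1`,
`|ψ_t^k⟩ = (1/√d) Σ_j ω^{t(d-j)} ω^{-k s_j} |j⟩` with `ω = e^{2πi/d}`. -/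
noncomputable def mub (d : ℕ) (k : Fin (d + 1)) (t : Fin d) : Fin d → ℂ :=
  fun j =>
    if k.val = 0 then (if j = t then 1 else 0)
    else (((Real.sqrt d)⁻¹ : ℝ) : ℂ) *
      Complex.exp (2 * Real.pi * Complex.I * ((t.val * (d - j.val) : ℕ) : ℂ) / d) *
      Complex.exp (-(2 * Real.pi * Complex.I * ((k.val * sIdx d j.val : ℕ) : ℂ) / d))

/- ### Auxiliary machinery -/

/-- `ee d n = exp(2πi n / d)`. -/
noncomputable def ee (d : ℕ) (n : ℤ) : ℂ :=
  Complex.exp (2 * Real.pi * Complex.I * (n : ℂ) / d)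

lemma ee_mul (d : ℕ) (m n : ℤ) : ee d m * ee d n = ee d (m + n) := by
  unfold ee; rw [← Complex.exp_add]; congr 1; push_cast; ring

lemma star_ee (d : ℕ) (n : ℤ) : star (ee d n) = ee d (-n) := by
  unfold ee
  rw [Complex.star_def, ← Complex.exp_conj]
  congr 1
  simp only [map_div₀, map_mul, map_ofNat, Complex.conj_I, map_intCast, map_natCast,
    Complex.conj_ofReal]
  push_cast; ring

lemma ee_pow (d : ℕ) (a : ℤ) (n : ℕ) : ee d ((n : ℤ) * a) = ee d a ^ n := by
  unfold ee
  rw [← Complex.exp_nat_mul]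
  congr 1
  push_cast
  ring

lemma ee_eq_one (d : ℕ) (hd : d ≠ 0) {a : ℤ} (hdvd : (d : ℤ) ∣ a) : ee d a = 1 := by
  obtain ⟨c, rfl⟩ := hdvd
  unfold ee
  have hdc : (d : ℂ) ≠ 0 := Nat.cast_ne_zero.mpr hd
  rw [show 2 * (Real.pi : ℂ) * Complex.I * (((d : ℤ) * c : ℤ) : ℂ) / d
      = (c : ℂ) * (2 * Real.pi * Complex.I) from by push_cast; field_simp]
  exact Complex.exp_int_mul_two_pi_mul_I c

lemma ee_ne_one (d : ℕ) (hd : d ≠ 0) {a : ℤ} (hdvd : ¬ (d : ℤ) ∣ a) : ee d a ≠ 1 := by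
  intro hone
  apply hdvd
  unfold ee at hone
  rw [Complex.exp_eq_one_iff] at hone
  obtain ⟨n, hn⟩ := hone
  have hdc : (d : ℂ) ≠ 0 := Nat.cast_ne_zero.mpr hd
  have hI : (Complex.I : ℂ) ≠ 0 := Complex.I_ne_zero
  have hpi : (Real.pi : ℂ) ≠ 0 := by exact_mod_cast Real.pi_ne_zero
  have h2 : (2 : ℂ) * Real.pi * Complex.I ≠ 0 := by simp [hI, hpi]
  field_simp at hn
  have h3 : (2 : ℂ) * Real.pi * Complex.I * (a : ℂ)
      = (2 : ℂ) * Real.pi * Complex.I * ((n : ℂ) * d) := by linear_combination (2 * (Real.pi : ℂ) * Complex.I) * hn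
  have h4 : (a : ℂ) = (n : ℂ) * d := mul_left_cancel₀ h2 h3
  have h5 : a = n * d := by exact_mod_cast h4
  exact ⟨n, by rw [h5]; ring⟩

lemma sum_ee (d : ℕ) (hd : d ≠ 0) {a : ℤ} (hdvd : ¬ (d : ℤ) ∣ a) :
    ∑ t : Fin d, ee d ((t.val : ℤ) * a) = 0 := by
  have hz : ee d a ^ d = 1 := by
    rw [← ee_pow]
    exact ee_eq_one d hd ⟨a, by ring⟩
  have hne : ee d a ≠ 1 := ee_ne_one d hd hdvd
  have key : ∑ t ∈ Finset.range d, ee d a ^ t = 0 := by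
    rw [geom_sum_eq hne, hz]
    simp only [sub_self, zero_div]
  calc ∑ t : Fin d, ee d ((t.val : ℤ) * a) = ∑ t : Fin d, ee d a ^ (t : ℕ) := by
        refine Finset.sum_congr rfl fun t _ => ?_
        rw [← ee_pow]
    _ = 0 := by rw [Fin.sum_univ_eq_sum_range]; exact key

lemma cast_mul_pred (d j : ℕ) :
    ((j * (j - 1) : ℕ) : ZMod d) = (j : ZMod d) * ((j : ZMod d) - 1) := by
  cases j with
  | zero => simp
  | succ n => push_cast [Nat.succ_sub_one]; ring

lemma two_sIdx (d j : ℕ) (hj : j ≤ d) : sIdx d j * 2 + j * (j - 1) = d * (d - 1) := by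
  have h1 : (∑ i ∈ Finset.Ico 0 j, i) + ∑ i ∈ Finset.Ico j d, i = ∑ i ∈ Finset.Ico 0 d, i :=
    Finset.sum_Ico_consecutive _ (Nat.zero_le j) hj
  have h2j : (∑ i ∈ Finset.Ico 0 j, i) * 2 = j * (j - 1) := by
    rw [← Finset.range_eq_Ico]; exact Finset.sum_range_id_mul_two j
  have h2d : (∑ i ∈ Finset.Ico 0 d, i) * 2 = d * (d - 1) := by
    rw [← Finset.range_eq_Ico]; exact Finset.sum_range_id_mul_two d
  unfold sIdx
  linarith

/-- Core number-theoretic fact: equal sums and equal `sIdx`-sums mod `d`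
force equality of the pairs as multisets. -/
lemma core (d : ℕ) (hp : Nat.Prime d) (hodd : Odd d) (j1 j2 j3 j4 : Fin d)
    (hA : (d : ℤ) ∣ (((j3.val : ℤ) + (j4.val : ℤ)) - ((j1.val : ℤ) + (j2.val : ℤ))))
    (hB : (d : ℤ) ∣ (((sIdx d j3.val : ℤ) + (sIdx d j4.val : ℤ))
            - ((sIdx d j1.val : ℤ) + (sIdx d j2.val : ℤ)))) :
    ({j1, j2} : Multiset (Fin d)) = ({j3, j4} : Multiset (Fin d)) := by
  haveI : Fact (Nat.Prime d) := ⟨hp⟩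
  haveI : NeZero d := ⟨hp.pos.ne'⟩
  set x1 : ZMod d := (j1.val : ZMod d) with hx1
  set x2 : ZMod d := (j2.val : ZMod d) with hx2
  set x3 : ZMod d := (j3.val : ZMod d) with hx3
  set x4 : ZMod d := (j4.val : ZMod d) with hx4
  have h2ne : (2 : ZMod d) ≠ 0 := by
    have hd2 : ¬ (d ∣ 2) := by
      intro hdvd
      have := (Nat.prime_dvd_prime_iff_eq hp Nat.prime_two).mp hdvd
      rw [this] at hodd
      exact (by decide : ¬ Odd 2) hodd
    intro h0
    exact hd2 ((ZMod.natCast_eq_zero_iff 2 d).mp (by exact_mod_cast h0))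
  have hA' : x3 + x4 - (x1 + x2) = 0 := by
    have := (ZMod.intCast_zmod_eq_zero_iff_dvd _ d).mpr hA
    push_cast at this
    linear_combination this
  have hsum : x1 + x2 = x3 + x4 := by linear_combination -hA'
  have key : ∀ j : Fin d, (2 : ZMod d) * (sIdx d j.val : ZMod d)
      = -((j.val : ZMod d) * ((j.val : ZMod d) - 1)) := by
    intro j
    have h0 := two_sIdx d j.val j.isLt.le
    have h1 := congrArg (Nat.cast : ℕ → ZMod d) h0
    have hz : ((d * (d - 1) : ℕ) : ZMod d) = 0 := by
      rw [Nat.cast_mul, ZMod.natCast_self, zero_mul]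
    rw [Nat.cast_add, cast_mul_pred, hz, Nat.cast_mul, Nat.cast_ofNat] at h1
    linear_combination h1
  have hB' : (sIdx d j3.val : ZMod d) + (sIdx d j4.val : ZMod d)
      - ((sIdx d j1.val : ZMod d) + (sIdx d j2.val : ZMod d)) = 0 := by
    have := (ZMod.intCast_zmod_eq_zero_iff_dvd _ d).mpr hB
    push_cast at this
    linear_combination this
  have hq : x1 * (x1 - 1) + x2 * (x2 - 1) = x3 * (x3 - 1) + x4 * (x4 - 1) := by
    linear_combination (2 : ZMod d) * hB' + key j1 + key j2 - key j3 - key j4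
  have hsq : x1 ^ 2 + x2 ^ 2 = x3 ^ 2 + x4 ^ 2 := by
    linear_combination hq + hsum
  have hprod : (2 : ZMod d) * (x1 * x2) = (2 : ZMod d) * (x3 * x4) := by
    linear_combination (x1 + x2 + x3 + x4) * hsum - hsq
  have hxprod : x1 * x2 = x3 * x4 := mul_left_cancel₀ h2ne hprod
  have hroot : (x3 - x1) * (x3 - x2) = 0 := by
    linear_combination (-x3) * hsum + hxprod
  have inj : ∀ a b : Fin d, ((a.val : ZMod d)) = ((b.val : ZMod d)) → a = b := by
    intro a b hab
    have := congrArg ZMod.val hab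
    rw [ZMod.val_cast_of_lt a.isLt, ZMod.val_cast_of_lt b.isLt] at this
    exact Fin.ext this
  rcases mul_eq_zero.mp hroot with h31 | h32
  · have e31 : x3 = x1 := by linear_combination h31
    have e42 : x4 = x2 := by linear_combination -hsum - e31
    rw [inj j3 j1 e31, inj j4 j2 e42]
  · have e32 : x3 = x2 := by linear_combination h32
    have e41 : x4 = x1 := by linear_combination -hsum - e32
    rw [inj j3 j2 e32, inj j4 j1 e41]
    exact Multiset.pair_comm j1 j2

/-- exponent of `mub` for `k ≥ 1`. -/
def mexp (d : ℕ) (k : Fin d) (t j : Fin d) : ℤ :=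
  (t.val : ℤ) * ((d - j.val : ℕ) : ℤ) - ((k.val + 1 : ℕ) : ℤ) * (sIdx d j.val : ℤ)

lemma mub_succ' (d : ℕ) (k : Fin d) (t j : Fin d) :
    mub d k.succ t j = (((Real.sqrt d)⁻¹ : ℝ) : ℂ) * ee d (mexp d k t j) := by
  unfold mub
  rw [if_neg (by simp [Fin.val_succ])]
  rw [mul_assoc, ← Complex.exp_add]
  unfold ee mexp
  congr 1
  rw [Fin.val_succ]
  push_cast
  ring_nf

lemma star_mub_succ (d : ℕ) (k : Fin d) (t j : Fin d) :
    star (mub d k.succ t j) = (((Real.sqrt d)⁻¹ : ℝ) : ℂ) * ee d (-(mexp d k t j)) := by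
  rw [mub_succ', star_mul', star_ee, Complex.star_def, Complex.conj_ofReal, mul_comm]

lemma prod_four (d : ℕ) (hd : d ≠ 0) (k : Fin d) (t j1 j2 j3 j4 : Fin d) :
    (mub d k.succ t j1 * mub d k.succ t j2) * star (mub d k.succ t j3 * mub d k.succ t j4)
      = ((d : ℂ) ^ 2)⁻¹ *
        ee d ((t.val : ℤ) * (((j3.val : ℤ) + (j4.val : ℤ)) - ((j1.val : ℤ) + (j2.val : ℤ)))
          + ((k.val : ℤ) + 1) * (((sIdx d j3.val : ℤ) + (sIdx d j4.val : ℤ))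
              - ((sIdx d j1.val : ℤ) + (sIdx d j2.val : ℤ)))) := by
  set C : ℂ := (((Real.sqrt d)⁻¹ : ℝ) : ℂ) with hC
  rw [star_mul', mub_succ' d k t j1, mub_succ' d k t j2, star_mub_succ d k t j3,
    star_mub_succ d k t j4]
  have hC4 : C * C * C * C = ((d : ℂ) ^ 2)⁻¹ := by
    have hr : ((Real.sqrt d)⁻¹) ^ 4 = ((d : ℝ) ^ 2)⁻¹ := by
      rw [inv_pow, show (4 : ℕ) = 2 * 2 from rfl, pow_mul,
        Real.sq_sqrt (by positivity : (0:ℝ) ≤ (d:ℝ))]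
    have hr2 : (Real.sqrt d)⁻¹ * (Real.sqrt d)⁻¹ * (Real.sqrt d)⁻¹ * (Real.sqrt d)⁻¹
        = ((d : ℝ) ^ 2)⁻¹ := by rw [← hr]; ring
    rw [hC, ← Complex.ofReal_mul, ← Complex.ofReal_mul, ← Complex.ofReal_mul, hr2]
    push_cast
    ring
  calc (C * ee d (mexp d k t j1) * (C * ee d (mexp d k t j2))) *
        (C * ee d (-(mexp d k t j3)) * (C * ee d (-(mexp d k t j4))))
      = (C * C * C * C) * (ee d (mexp d k t j1) * (ee d (mexp d k t j2) *
          (ee d (-(mexp d k t j3)) * ee d (-(mexp d k t j4))))) := by ring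
    _ = ((d : ℂ) ^ 2)⁻¹ * ee d (mexp d k t j1 + (mexp d k t j2 +
          (-(mexp d k t j3) + -(mexp d k t j4)))) := by rw [ee_mul, ee_mul, ee_mul, hC4]
    _ = _ := by
        congr 1
        unfold mexp
        have e1 : ((d - j1.val : ℕ) : ℤ) = (d : ℤ) - j1.val := by omega
        have e2 : ((d - j2.val : ℕ) : ℤ) = (d : ℤ) - j2.val := by omega
        have e3 : ((d - j3.val : ℕ) : ℤ) = (d : ℤ) - j3.val := by omega
        have e4 : ((d - j4.val : ℕ) : ℤ) = (d : ℤ) - j4.val := by omega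
        rw [e1, e2, e3, e4]
        push_cast
        ring_nf

/-- For `d` an odd prime, the operator
`Q = (1/(d(d+1))) Σ_{k,t} (|ψ_t^k⟩⟨ψ_t^k|)^{⊗2}` is diagonal in the product
computational basis: `⟨j₁j₂|Q|j₃j₄⟩ = 0` whenever `{j₁,j₂} ≠ {j₃,j₄}` as
multisets. -/
theorem mub_Q_diagonal (d : ℕ) (hp : Nat.Prime d) (hodd : Odd d)
    (j1 j2 j3 j4 : Fin d)
    (h : ({j1, j2} : Multiset (Fin d)) ≠ ({j3, j4} : Multiset (Fin d))) :
    (((d * (d + 1) : ℕ) : ℂ)⁻¹ •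
        ∑ k : Fin (d + 1), ∑ t : Fin d, projOp (vecPow 2 (mub d k t)))
      ![j1, j2] ![j3, j4] = 0 := by
  have hd : d ≠ 0 := hp.pos.ne'
  set A : ℤ := ((j3.val : ℤ) + (j4.val : ℤ)) - ((j1.val : ℤ) + (j2.val : ℤ)) with hAdef
  set B : ℤ := ((sIdx d j3.val : ℤ) + (sIdx d j4.val : ℤ))
      - ((sIdx d j1.val : ℤ) + (sIdx d j2.val : ℤ)) with hBdef
  have hsum : ∑ k : Fin (d + 1), ∑ t : Fin d,
      (mub d k t j1 * mub d k t j2) * star (mub d k t j3 * mub d k t j4) = 0 := by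
    rw [Fin.sum_univ_succ]
    have hz0 : ∑ t : Fin d,
        (mub d 0 t j1 * mub d 0 t j2) * star (mub d 0 t j3 * mub d 0 t j4) = 0 := by
      apply Finset.sum_eq_zero
      intro t _
      by_cases h1 : j1 = t
      · by_cases h2 : j2 = t
        · by_cases h3 : j3 = t
          · by_cases h4 : j4 = t
            · exfalso; apply h; rw [h1, h2, h3, h4]
            · simp [mub, h1, h2, h3, h4]
          · simp [mub, h1, h2, h3]
        · simp [mub, h1, h2]
      · simp [mub, h1]
    rw [hz0, zero_add]
    by_cases hdA : (d : ℤ) ∣ A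
    · by_cases hdB : (d : ℤ) ∣ B
      · exact absurd (core d hp hodd j1 j2 j3 j4 hdA hdB) h
      · have hk1 : ∑ k : Fin d, ee d (((k.val : ℤ) + 1) * B) = 0 := by
          have hs : ∀ k : Fin d, ee d (((k.val : ℤ) + 1) * B)
              = ee d ((k.val : ℤ) * B) * ee d B := fun k => by
            rw [ee_mul]; congr 1; ring
          rw [Finset.sum_congr rfl fun k _ => hs k, ← Finset.sum_mul, sum_ee d hd hdB,
            zero_mul]
        have hterm : ∀ k : Fin d, ∀ t : Fin d,
            (mub d k.succ t j1 * mub d k.succ t j2) *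
              star (mub d k.succ t j3 * mub d k.succ t j4)
              = ((d : ℂ) ^ 2)⁻¹ * ee d (((k.val : ℤ) + 1) * B) := by
          intro k t
          rw [prod_four d hd k t j1 j2 j3 j4, ← hAdef, ← hBdef]
          congr 1
          rw [show (t.val : ℤ) * A + ((k.val : ℤ) + 1) * B
              = ((k.val : ℤ) + 1) * B + (t.val : ℤ) * A from by ring, ← ee_mul,
            ee_eq_one d hd (Dvd.dvd.mul_left hdA _), mul_one]
        calc ∑ k : Fin d, ∑ t : Fin d,
              (mub d k.succ t j1 * mub d k.succ t j2) *
                star (mub d k.succ t j3 * mub d k.succ t j4)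
            = ∑ k : Fin d, ((d : ℂ) * ((d : ℂ) ^ 2)⁻¹) * ee d (((k.val : ℤ) + 1) * B) := by
              refine Finset.sum_congr rfl fun k _ => ?_
              rw [Finset.sum_congr rfl fun t _ => hterm k t, Finset.sum_const,
                Finset.card_univ, Fintype.card_fin, nsmul_eq_mul]
              ring
          _ = ((d : ℂ) * ((d : ℂ) ^ 2)⁻¹) * ∑ k : Fin d, ee d (((k.val : ℤ) + 1) * B) := by
              rw [← Finset.mul_sum]
          _ = 0 := by rw [hk1, mul_zero]
    · apply Finset.sum_eq_zero
      intro k _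
      have hs : ∀ t : Fin d,
          (mub d k.succ t j1 * mub d k.succ t j2) *
            star (mub d k.succ t j3 * mub d k.succ t j4)
          = (((d : ℂ) ^ 2)⁻¹ * ee d (((k.val : ℤ) + 1) * B)) * ee d ((t.val : ℤ) * A) := by
        intro t
        rw [prod_four d hd k t j1 j2 j3 j4, ← hAdef, ← hBdef, ← ee_mul]
        ring
      rw [Finset.sum_congr rfl fun t _ => hs t, ← Finset.mul_sum, sum_ee d hd hdA, mul_zero]
  simp only [Matrix.smul_apply, Matrix.sum_apply, projOp, vecPow, Matrix.of_apply,
    Fin.prod_univ_two, Matrix.cons_val_zero, Matrix.cons_val_one, Matrix.head_cons,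
    smul_eq_mul]
  rw [hsum, mul_zero]
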